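/- Suppose the marginals on X of the probability measures D, P₁,…,P_I, Q₁,…,Q_J are atomless, Φ is a decomposable set of measurable functions X → ℝ^K, and for every φ ∈ Φ the integrands ℓ(φ(x),y), g_i(φ(x),y), h_j(φ(x),y) are integrable with respect to D, P_i, Q_j respectively. Then the cost-constraint epigraph M_φ = {(f, u, v) ∈ ℝ × ℝ^I × ℝ^J : ∃φ∈Φ such that E_D[ℓ(φ(x),y)] = f, E_{P_i}[g_i(φ(x),y)] ≤ u_i for all i = 1,…,I, and E_{Q_j}[h_j(φ(x),y)] = v_j for all j = 1,…,J} is a convex subset of ℝ^{1+I+J}. -/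

import Mathlib

set_option maxHeartbeats 1600000

open MeasureTheory

/-- A (positive) measure is atomless: every measurable set of nonzero measure has a
measurable subset whose measure is neither `0` nor the full measure. -/
def MeasureAtomless {α : Type*} [MeasurableSpace α] (μ : Measure α) : Prop :=
  ∀ A : Set α, MeasurableSet A → μ A ≠ 0 →
    ∃ B ⊆ A, MeasurableSet B ∧ μ B ≠ 0 ∧ μ B ≠ μ A

open Set
open scoped RealInnerProductSpace ENNReal NNReal

namespace LyapAux

variable {X : Type*} [MeasurableSpace X] {μ : Measure X} [IsFiniteMeasure μ]

lemma step {μ ν : Measure X} [IsFiniteMeasure ν] (hle : μ ≤ ν) (hμ : MeasureAtomless μ)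
    {A : Set X} (hA : MeasurableSet A) (hμA : μ A ≠ 0) :
    ∃ B ⊆ A, MeasurableSet B ∧ ν B ≠ 0 ∧ ν B ≠ ν A := by
  obtain ⟨B, hBA, hBm, hB0, hBne⟩ := hμ A hA hμA
  refine ⟨B, hBA, hBm, ?_, ?_⟩
  · intro hzero
    exact hB0 (le_antisymm (le_trans (hle B) hzero.le) (zero_le))
  · intro heq
    have hdiff : ν (A \ B) = 0 := by
      rw [measure_diff hBA hBm.nullMeasurableSet (measure_ne_top ν B), heq, tsub_self]
    have hμdiff : μ (A \ B) = 0 :=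
      le_antisymm (le_trans (hle (A \ B)) hdiff.le) (zero_le)
    have : μ A ≤ μ B := by
      calc μ A = μ (B ∪ A \ B) := by rw [Set.union_diff_cancel hBA]
        _ ≤ μ B + μ (A \ B) := measure_union_le _ _
        _ = μ B := by rw [hμdiff, add_zero]
    exact hBne (le_antisymm (measure_mono hBA) this)

lemma atomless_of_exists {ν : Measure X} [IsFiniteMeasure ν]
    (H : ∀ A : Set X, MeasurableSet A → ν A ≠ 0 →
      ∃ μ : Measure X, μ ≤ ν ∧ MeasureAtomless μ ∧ μ A ≠ 0) :
    MeasureAtomless ν := by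
  intro A hA hνA
  obtain ⟨μ, h1, h2, h3⟩ := H A hA hνA
  exact step h1 h2 hA h3

lemma exists_disjoint_pieces {μ : Measure X} [IsFiniteMeasure μ] (hμ : MeasureAtomless μ)
    (m : ℕ) :
    ∀ (A : Set X), MeasurableSet A → μ A ≠ 0 →
    ∃ B : Fin m → Set X, (∀ p, B p ⊆ A) ∧ (∀ p, MeasurableSet (B p)) ∧ (∀ p, μ (B p) ≠ 0) ∧
      ∀ p q, p ≠ q → Disjoint (B p) (B q) := by
  induction m with
  | zero =>
    intro A _ _
    exact ⟨fun p => p.elim0, fun p => p.elim0, fun p => p.elim0, fun p => p.elim0,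
      fun p => p.elim0⟩
  | succ m ih =>
    intro A hA hμA
    obtain ⟨B₀, hB₀A, hB₀m, hB₀0, hB₀ne⟩ := hμ A hA hμA
    have hdm : MeasurableSet (A \ B₀) := hA.diff hB₀m
    have hd0 : μ (A \ B₀) ≠ 0 := by
      intro hz
      have : μ A ≤ μ B₀ := by
        calc μ A = μ (B₀ ∪ A \ B₀) := by rw [Set.union_diff_cancel hB₀A]
          _ ≤ μ B₀ + μ (A \ B₀) := measure_union_le _ _
          _ = μ B₀ := by rw [hz, add_zero]
      exact hB₀ne (le_antisymm (measure_mono hB₀A) this)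
    obtain ⟨B, hBsub, hBm, hB0, hBdisj⟩ := ih (A \ B₀) hdm hd0
    refine ⟨Fin.cons B₀ B, ?_, ?_, ?_, ?_⟩
    · intro p
      refine Fin.cases ?_ ?_ p
      · exact hB₀A
      · intro q; exact (hBsub q).trans diff_subset
    · intro p
      refine Fin.cases ?_ ?_ p
      · exact hB₀m
      · intro q; exact hBm q
    · intro p
      refine Fin.cases ?_ ?_ p
      · exact hB₀0
      · intro q; exact hB0 q
    · intro p q hpq
      induction p using Fin.cases with
      | zero =>
        induction q using Fin.cases with
        | zero => exact absurd rfl hpq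
        | succ q' =>
          simp only [Fin.cons_zero, Fin.cons_succ]
          exact Set.disjoint_sdiff_right.mono_right (hBsub q')
      | succ p' =>
        induction q using Fin.cases with
        | zero =>
          simp only [Fin.cons_zero, Fin.cons_succ]
          exact (Set.disjoint_sdiff_right.mono_right (hBsub p')).symm
        | succ q' =>
          simp only [Fin.cons_succ]
          exact hBdisj p' q' (fun hh => hpq (by rw [hh]))


lemma inner_L2 (g h : Lp ℝ 2 μ) : ⟪g, h⟫ = ∫ x, (g : X → ℝ) x * (h : X → ℝ) x ∂μ := by
  rw [MeasureTheory.L2.inner_def]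
  congr 1
  funext x
  simp [mul_comm]

lemma ae_nonneg_of_forall_inner {g : Lp ℝ 2 μ}
    (hg : ∀ u : Lp ℝ 2 μ, 0 ≤ᵐ[μ] (u : X → ℝ) → 0 ≤ ∫ x, (g : X → ℝ) x * (u : X → ℝ) x ∂μ) :
    0 ≤ᵐ[μ] (g : X → ℝ) := by
  have hgm := (Lp.aestronglyMeasurable g)
  set m : X → ℝ := hgm.mk _ with hm
  have hmm : Measurable m := (hgm.stronglyMeasurable_mk).measurable
  have hgae : (g : X → ℝ) =ᵐ[μ] m := hgm.ae_eq_mk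
  have hint : Integrable (g : X → ℝ) μ := (Lp.memLp g).integrable (by norm_num)
  have hintm : Integrable m μ := hint.congr hgae
  have hEn : ∀ n : ℕ, μ {x | m x ≤ -(1 / (n + 1))} = 0 := by
    intro n
    set E := {x | m x ≤ -(1 / (n + 1))} with hE
    have hEm : MeasurableSet E := hmm measurableSet_Iic
    have humem : MemLp (E.indicator (fun _ => (1:ℝ))) 2 μ := by
      refine MemLp.of_bound ((measurable_one.indicator hEm).aestronglyMeasurable) 1 ?_
      filter_upwards with x
      by_cases hx : x ∈ E <;> simp [Set.indicator, hx]
    set u : Lp ℝ 2 μ := humem.toLp _ with hu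
    have hue : (u : X → ℝ) =ᵐ[μ] E.indicator (fun _ => (1:ℝ)) := humem.coeFn_toLp
    have hupos : 0 ≤ᵐ[μ] (u : X → ℝ) := by
      filter_upwards [hue] with x hx
      rw [hx]; exact Set.indicator_nonneg (fun _ _ => zero_le_one) x
    have h0 := hg u hupos
    have heq : ∫ x, (g : X → ℝ) x * (u : X → ℝ) x ∂μ = ∫ x in E, m x ∂μ := by
      rw [← integral_indicator hEm]
      refine integral_congr_ae ?_
      filter_upwards [hgae, hue] with x h1 h2
      rw [h1, h2]
      by_cases hx : x ∈ E <;> simp [Set.indicator, hx]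
    rw [heq] at h0
    have hle : ∫ x in E, m x ∂μ ≤ ∫ x in E, -(1 / (n + 1 : ℝ)) ∂μ := by
      refine setIntegral_mono_on hintm.integrableOn ((integrableOn_const_iff (by finiteness)).mpr ?_) hEm ?_
      · right; exact measure_lt_top _ _
      · intro x hx; exact hx
    rw [setIntegral_const] at hle
    have hc : (0:ℝ) < 1 / (n + 1) := by positivity
    have := le_trans h0 hle
    simp only [smul_eq_mul] at this
    have hμE : (μ E).toReal ≤ 0 := by change μ.real E ≤ 0; nlinarith [this]
    have := le_antisymm hμE ENNReal.toReal_nonneg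
    exact (ENNReal.toReal_eq_zero_iff _).mp this |>.resolve_right (fun hh => (measure_ne_top μ E) hh)
  have hneg : μ {x | m x < 0} = 0 := by
    have hsub : {x | m x < 0} ⊆ ⋃ n : ℕ, {x | m x ≤ -(1 / (n + 1))} := by
      intro x hx
      obtain ⟨n, hn⟩ := exists_nat_one_div_lt (K := ℝ) (neg_pos.mpr hx)
      exact mem_iUnion.mpr ⟨n, by simp only [mem_setOf_eq]; linarith⟩
    exact measure_mono_null hsub (measure_iUnion_null hEn)
  filter_upwards [hgae, (ae_iff.mpr (by simpa using hneg) : ∀ᵐ x ∂μ, ¬ m x < 0)] with x h1 h2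
  rw [h1]; exact not_lt.mp h2


lemma lyapunov_segment {ι : Type*} [Fintype ι]
    (hatom : MeasureAtomless μ) (f : ι → X → ℝ)
    (hfm : ∀ k, Measurable (f k)) (hf0 : ∀ k, 0 ≤ᵐ[μ] f k) (hf1 : ∀ k, f k ≤ᵐ[μ] 1)
    (a : ℝ) (ha0 : 0 ≤ a) (ha1 : a ≤ 1) :
    ∃ Z : Set X, MeasurableSet Z ∧ ∀ k, ∫ x in Z, f k x ∂μ = a * ∫ x, f k x ∂μ := by
  classical
  -- L² elements for the densities and the constants
  have hfmem : ∀ k, MemLp (f k) 2 μ := by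
    intro k
    refine MemLp.of_bound (hfm k).aestronglyMeasurable 1 ?_
    filter_upwards [hf0 k, hf1 k] with x h1 h2
    simp only [Pi.zero_apply] at h1
    simp only [Pi.one_apply] at h2
    rw [Real.norm_eq_abs, abs_le]; exact ⟨by linarith, h2⟩
  set fk : ι → Lp ℝ 2 μ := fun k => (hfmem k).toLp (f k) with hfkdef
  have hfk_ae : ∀ k, (fk k : X → ℝ) =ᵐ[μ] f k := fun k => (hfmem k).coeFn_toLp
  set c : ι → ℝ := fun k => a * ∫ x, f k x ∂μ with hcdef
  have hinner : ∀ (g : Lp ℝ 2 μ) k, ⟪g, fk k⟫ = ∫ x, (g : X → ℝ) x * f k x ∂μ := by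
    intro g k
    rw [inner_L2]
    refine integral_congr_ae ?_
    filter_upwards [hfk_ae k] with x hx
    rw [hx]
  have hone : MemLp (fun _ : X => (1:ℝ)) 2 μ := memLp_const 1
  set one : Lp ℝ 2 μ := hone.toLp _ with honedef
  have hone_ae : (one : X → ℝ) =ᵐ[μ] fun _ => (1:ℝ) := hone.coeFn_toLp
  -- the constraint set W in L²
  set W : Set (Lp ℝ 2 μ) :=
    {g | (∀ᵐ x ∂μ, (g : X → ℝ) x ∈ Icc (0:ℝ) 1) ∧ ∀ k, ⟪g, fk k⟫ = c k} with hWdef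
  -- the constant function a belongs to W
  have hamem : MemLp (fun _ : X => a) 2 μ := memLp_const a
  set ga : Lp ℝ 2 μ := hamem.toLp _ with hgadef
  have hgaW : ga ∈ W := by
    constructor
    · filter_upwards [hamem.coeFn_toLp] with x hx
      rw [hx]; exact ⟨ha0, ha1⟩
    · intro k
      rw [hinner]
      rw [integral_congr_ae (g := fun x => a * f k x) ?_, integral_const_mul]
      filter_upwards [hamem.coeFn_toLp] with x hx
      rw [hx]
  -- the embedding into the weak dual
  set j : Lp ℝ 2 μ → WeakDual ℝ (Lp ℝ 2 μ) :=
    fun g => StrongDual.toWeakDual (InnerProductSpace.toDual ℝ _ g) with hjdef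
  have japply : ∀ (g u : Lp ℝ 2 μ), j g u = ⟪g, u⟫ := fun g u => rfl
  have jinj : Function.Injective j := by
    intro u v huv
    have : ∀ w, ⟪u, w⟫ = ⟪v, w⟫ := by
      intro w; rw [← japply, ← japply, huv]
    have h0 : ⟪u - v, u - v⟫ = 0 := by
      rw [inner_sub_left, this (u - v), sub_self]
    exact sub_eq_zero.mp (inner_self_eq_zero.mp h0)
  -- description of `j '' W` by weak-star closed conditions
  set Kd : Set (WeakDual ℝ (Lp ℝ 2 μ)) :=
    {φ | (∀ u : Lp ℝ 2 μ, 0 ≤ᵐ[μ] (u : X → ℝ) → φ u ∈ Icc 0 ⟪one, u⟫) ∧ ∀ k, φ (fk k) = c k}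
    with hKddef
  have hKeq : j '' W = Kd := by
    apply Set.Subset.antisymm
    · rintro _ ⟨g, hgW, rfl⟩
      constructor
      · intro u hu
        constructor
        · rw [japply, inner_L2]
          refine integral_nonneg_of_ae ?_
          filter_upwards [hgW.1, hu] with x h1 h2
          simp only [Pi.zero_apply] at h2
          exact mul_nonneg h1.1 h2
        · have hkey : 0 ≤ ⟪one, u⟫ - ⟪g, u⟫ := by
            rw [← inner_sub_left, inner_L2]
            refine integral_nonneg_of_ae ?_
            filter_upwards [Lp.coeFn_sub one g, hone_ae, hgW.1, hu] with x hx1 hx2 hx3 hx4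
            simp only [Pi.zero_apply] at hx4
            rw [hx1, Pi.sub_apply, hx2]
            exact mul_nonneg (by linarith [hx3.2]) hx4
          rw [japply]
          linarith
      · intro k; rw [japply, hgW.2 k]
    · rintro φ ⟨h1, h2⟩
      set g : Lp ℝ 2 μ := (InnerProductSpace.toDual ℝ (Lp ℝ 2 μ)).symm
        (WeakDual.toStrongDual φ) with hgdef
      have hjg : j g = φ := by
        simp only [hjdef, hgdef, LinearIsometryEquiv.apply_symm_apply]
        rfl
      have hφapp : ∀ u, ⟪g, u⟫ = φ u := by
        intro u; rw [← japply, hjg]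
      refine ⟨g, ⟨?_, ?_⟩, hjg⟩
      · have hlow : 0 ≤ᵐ[μ] (g : X → ℝ) := by
          refine ae_nonneg_of_forall_inner fun u hu => ?_
          rw [← inner_L2, hφapp]
          exact (h1 u hu).1
        have hup : 0 ≤ᵐ[μ] ((one - g : Lp ℝ 2 μ) : X → ℝ) := by
          refine ae_nonneg_of_forall_inner fun u hu => ?_
          rw [← inner_L2, inner_sub_left, hφapp]
          have := (h1 u hu).2
          linarith
        filter_upwards [hlow, hup, Lp.coeFn_sub one g, hone_ae] with x h1' h2' h3' h4'
        simp only [Pi.zero_apply] at h1' h2'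
        rw [h3', Pi.sub_apply, h4'] at h2'
        exact ⟨h1', by linarith⟩
      · intro k; rw [hφapp]; exact h2 k
  -- `Kd` is weak-star closed
  have hKclosed : IsClosed Kd := by
    have hrw : Kd = (⋂ (u : Lp ℝ 2 μ),
        {φ : WeakDual ℝ (Lp ℝ 2 μ) | 0 ≤ᵐ[μ] (u : X → ℝ) → φ u ∈ Icc 0 ⟪one, u⟫}) ∩
        ⋂ k, {φ : WeakDual ℝ (Lp ℝ 2 μ) | φ (fk k) = c k} := by
      ext φ
      simp only [hKddef, Set.mem_setOf_eq, Set.mem_inter_iff, Set.mem_iInter]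
    rw [hrw]
    refine IsClosed.inter (isClosed_iInter fun u => ?_) (isClosed_iInter fun k => ?_)
    · by_cases hu : 0 ≤ᵐ[μ] (u : X → ℝ)
      · have : {φ : WeakDual ℝ (Lp ℝ 2 μ) | 0 ≤ᵐ[μ] (u : X → ℝ) → φ u ∈ Icc 0 ⟪one, u⟫} =
            (fun φ : WeakDual ℝ (Lp ℝ 2 μ) => φ u) ⁻¹' (Icc 0 ⟪one, u⟫) := by
          ext φ; simp [hu]
        rw [this]
        exact IsClosed.preimage (WeakDual.eval_continuous u) isClosed_Icc
      · have : {φ : WeakDual ℝ (Lp ℝ 2 μ) | 0 ≤ᵐ[μ] (u : X → ℝ) → φ u ∈ Icc 0 ⟪one, u⟫} =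
            Set.univ := by
          ext φ; simp [hu]
        rw [this]; exact isClosed_univ
    · have : {φ : WeakDual ℝ (Lp ℝ 2 μ) | φ (fk k) = c k} =
          (fun φ : WeakDual ℝ (Lp ℝ 2 μ) => φ (fk k)) ⁻¹' {c k} := rfl
      rw [this]
      exact IsClosed.preimage (WeakDual.eval_continuous (fk k)) isClosed_singleton
  -- `Kd` is bounded hence weak-star compact
  set r : ℝ := (measureUnivNNReal μ : ℝ) ^ (2 : ℝ≥0∞).toReal⁻¹ * 1 with hrdef
  have hKsub : Kd ⊆ WeakDual.toStrongDual ⁻¹' Metric.closedBall 0 r := by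
    rw [← hKeq]
    rintro _ ⟨g, hgW, rfl⟩
    have hb : ‖g‖ ≤ r := by
      refine Lp.norm_le_of_ae_bound zero_le_one ?_
      filter_upwards [hgW.1] with x hx
      rw [Real.norm_eq_abs, abs_le]; exact ⟨by linarith [hx.1], hx.2⟩
    simp only [Set.mem_preimage, Metric.mem_closedBall, dist_zero_right]
    have hnorm : ‖WeakDual.toStrongDual (j g)‖ = ‖g‖ := by
      have : WeakDual.toStrongDual (j g) = InnerProductSpace.toDual ℝ (Lp ℝ 2 μ) g := rfl
      rw [this]
      exact LinearIsometryEquiv.norm_map _ g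
    rw [hnorm]; exact hb
  have hKcomp : IsCompact Kd :=
    (WeakDual.isCompact_closedBall (0 : StrongDual ℝ (Lp ℝ 2 μ)) r).of_isClosed_subset hKclosed hKsub
  -- extreme point
  have hKne : Kd.Nonempty := ⟨j ga, hKeq ▸ Set.mem_image_of_mem j hgaW⟩
  haveI : LocallyConvexSpace ℝ (WeakDual ℝ (Lp ℝ 2 μ)) :=
    WeakBilin.locallyConvexSpace (B := topDualPairing ℝ (Lp ℝ 2 μ))
  obtain ⟨φ₀, hφ₀⟩ := hKcomp.extremePoints_nonempty hKne
  rw [mem_extremePoints] at hφ₀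
  obtain ⟨hφ₀K, hφ₀ext⟩ := hφ₀
  rw [← hKeq] at hφ₀K
  obtain ⟨g₀, hg₀W, hjg₀⟩ := hφ₀K
  -- a measurable representative of g₀ with values in [0,1]
  have hg₀meas := (Lp.aestronglyMeasurable g₀)
  set mr : X → ℝ := hg₀meas.mk _ with hmrdef
  have hmrm : Measurable mr := hg₀meas.stronglyMeasurable_mk.measurable
  set gh : X → ℝ := fun x => max 0 (min 1 (mr x)) with hghdef
  have hghm : Measurable gh := measurable_const.max (measurable_const.min hmrm)
  have hghbd : ∀ x, gh x ∈ Icc (0:ℝ) 1 :=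
    fun x => ⟨le_max_left _ _, max_le zero_le_one (min_le_left _ _)⟩
  have hghae : (g₀ : X → ℝ) =ᵐ[μ] gh := by
    filter_upwards [hg₀W.1, hg₀meas.ae_eq_mk] with x h1 h2
    rw [← hmrdef] at h2
    show (g₀ : X → ℝ) x = max 0 (min 1 (mr x))
    rw [← h2, min_eq_right h1.2, max_eq_right h1.1]
  by_cases hmid : μ (gh ⁻¹' Ioo (0:ℝ) 1) = 0
  · -- `g₀` is a.e. an indicator: done
    set Z : Set X := {x | gh x = 1} with hZdef
    have hZm : MeasurableSet Z := hghm (measurableSet_singleton 1)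
    refine ⟨Z, hZm, fun k => ?_⟩
    have h01 : ∀ᵐ x ∂μ, gh x = 0 ∨ gh x = 1 := by
      have hns : ∀ᵐ x ∂μ, ¬ gh x ∈ Ioo (0:ℝ) 1 := by
        rw [ae_iff]; convert hmid using 2; ext x; simp
      filter_upwards [hns] with x hx
      rcases eq_or_lt_of_le (hghbd x).1 with h | h
      · exact Or.inl h.symm
      · right
        rcases eq_or_lt_of_le (hghbd x).2 with h' | h'
        · exact h'
        · exact absurd ⟨h, h'⟩ hx
    have hind : ∀ᵐ x ∂μ, Z.indicator (fun _ => (1:ℝ)) x = gh x := by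
      filter_upwards [h01] with x hx
      rcases hx with hx | hx
      · rw [Set.indicator_of_notMem, hx]
        intro hxZ
        have hgx1 : gh x = 1 := hxZ
        rw [hx] at hgx1
        norm_num at hgx1
      · rw [Set.indicator_of_mem (show x ∈ Z from hx), hx]
    calc ∫ x in Z, f k x ∂μ
        = ∫ x, Z.indicator (fun _ => (1:ℝ)) x * f k x ∂μ := by
          rw [← integral_indicator hZm]
          refine integral_congr_ae (Filter.Eventually.of_forall fun x => ?_)
          by_cases hx : x ∈ Z <;> simp [Set.indicator, hx]
      _ = ∫ x, (g₀ : X → ℝ) x * f k x ∂μ := by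
          refine integral_congr_ae ?_
          filter_upwards [hind, hghae] with x h1 h2
          rw [h1, h2]
      _ = c k := by rw [← hinner g₀ k]; exact hg₀W.2 k
      _ = a * ∫ x, f k x ∂μ := rfl
  · -- otherwise we contradict extremality of φ₀
    exfalso
    obtain ⟨n₀, hn₀⟩ : ∃ n : ℕ,
        μ (gh ⁻¹' Icc (1/((n:ℝ)+2)) (1 - 1/((n:ℝ)+2))) ≠ 0 := by
      by_contra hall
      push_neg at hall
      apply hmid
      refine measure_mono_null ?_ (measure_iUnion_null fun n => hall n)
      intro x hx
      obtain ⟨hx0, hx1⟩ := hx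
      have hmin : (0:ℝ) < min (gh x) (1 - gh x) := lt_min hx0 (by linarith)
      obtain ⟨n, hn⟩ := exists_nat_one_div_lt (K := ℝ) hmin
      have hpos : (0:ℝ) < (n:ℝ) + 1 := by positivity
      have h12 : (1:ℝ)/((n:ℝ)+2) ≤ 1/((n:ℝ)+1) := by
        apply one_div_le_one_div_of_le hpos
        linarith
      have hm1 := min_le_left (gh x) (1 - gh x)
      have hm2 := min_le_right (gh x) (1 - gh x)
      refine Set.mem_iUnion.mpr ⟨n, ?_⟩
      exact ⟨by linarith, by linarith⟩
    set ε : ℝ := 1/((n₀:ℝ)+2) with hεdef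
    have hε : 0 < ε := by positivity
    set A : Set X := gh ⁻¹' Icc ε (1 - ε) with hAdef
    have hAm : MeasurableSet A := hghm measurableSet_Icc
    have hA0 : μ A ≠ 0 := hn₀
    obtain ⟨B, hBA, hBm, hB0, hBdisj⟩ :=
      exists_disjoint_pieces hatom (Fintype.card ι + 1) A hAm hA0
    -- a nonzero kernel vector of the (card ι) × (card ι + 1) integral matrix
    set T : (Fin (Fintype.card ι + 1) → ℝ) →ₗ[ℝ] (ι → ℝ) :=
      (Matrix.of fun (k : ι) (p : Fin (Fintype.card ι + 1)) =>
        ∫ x in B p, f k x ∂μ).mulVecLin with hTdef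
    have hni : ¬ Function.Injective T := by
      intro hinj
      have hle := LinearMap.finrank_le_finrank_of_injective hinj
      rw [Module.finrank_fintype_fun_eq_card, Module.finrank_fintype_fun_eq_card,
        Fintype.card_fin] at hle
      omega
    obtain ⟨x1, x2, hT12, hne12⟩ := Function.not_injective_iff.mp hni
    set cvec := x1 - x2 with hcvecdef
    have hc0 : cvec ≠ 0 := sub_ne_zero_of_ne hne12
    have hTc : T cvec = 0 := by rw [map_sub, hT12, sub_self]
    obtain ⟨p₀, hp₀⟩ := Function.ne_iff.mp hc0
    have hp₀' : cvec p₀ ≠ 0 := by simpa using hp₀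
    set M : ℝ := ∑ p, |cvec p| with hMdef
    have hM : 0 < M :=
      Finset.sum_pos' (fun p _ => abs_nonneg _) ⟨p₀, Finset.mem_univ _, abs_pos.mpr hp₀'⟩
    set d : Fin (Fintype.card ι + 1) → ℝ := fun p => (ε / M) * cvec p with hddef
    have hdbd : ∀ p, |d p| ≤ ε := by
      intro p
      show |(ε / M) * cvec p| ≤ ε
      rw [abs_mul, abs_of_nonneg (le_of_lt (div_pos hε hM))]
      have h1 : |cvec p| ≤ M :=
        Finset.single_le_sum (f := fun p => |cvec p|) (fun p _ => abs_nonneg _)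
          (Finset.mem_univ p)
      calc ε / M * |cvec p| ≤ ε / M * M :=
            mul_le_mul_of_nonneg_left h1 (le_of_lt (div_pos hε hM))
        _ = ε := div_mul_cancel₀ ε hM.ne'
    have hdp₀ : d p₀ ≠ 0 := mul_ne_zero (by positivity) hp₀'
    have hTd : ∀ k, ∑ p, d p * ∫ x in B p, f k x ∂μ = 0 := by
      intro k
      have h1 : (T cvec) k = 0 := by rw [hTc]; rfl
      rw [hTdef] at h1
      simp only [Matrix.mulVecLin_apply, Matrix.mulVec, dotProduct,
        Matrix.of_apply] at h1
      calc ∑ p, d p * ∫ x in B p, f k x ∂μ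
          = (ε / M) * ∑ p, (∫ x in B p, f k x ∂μ) * cvec p := by
            rw [Finset.mul_sum]
            refine Finset.sum_congr rfl fun p _ => ?_
            show (ε / M) * cvec p * _ = _
            ring
        _ = 0 := by rw [h1, mul_zero]
    -- the perturbation function
    set hfun : X → ℝ := fun x => ∑ p, (B p).indicator (fun _ => d p) x with hhdef
    have hfunm : Measurable hfun :=
      Finset.measurable_sum _ fun p _ => measurable_const.indicator (hBm p)
    have hval : ∀ p, ∀ x ∈ B p, hfun x = d p := by
      intro p x hx
      show ∑ q, (B q).indicator (fun _ => d q) x = d p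
      rw [Finset.sum_eq_single p]
      · rw [Set.indicator_of_mem hx]
      · intro q _ hq
        exact Set.indicator_of_notMem
          (fun hxq => Set.disjoint_left.mp (hBdisj q p hq) hxq hx) _
      · intro hmem; exact absurd (Finset.mem_univ p) hmem
    have hzero : ∀ x ∉ A, hfun x = 0 := by
      intro x hx
      refine Finset.sum_eq_zero fun p _ => ?_
      exact Set.indicator_of_notMem (fun hxp => hx (hBA p hxp)) _
    have hbd : ∀ x, |hfun x| ≤ ε := by
      intro x
      by_cases hx : ∃ p, x ∈ B p
      · obtain ⟨p, hp⟩ := hx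
        rw [hval p x hp]; exact hdbd p
      · push_neg at hx
        have hzz : hfun x = 0 :=
          Finset.sum_eq_zero fun p _ => Set.indicator_of_notMem (hx p) _
        rw [hzz]; simpa using hε.le
    have hmemh : MemLp hfun 2 μ := MemLp.of_bound hfunm.aestronglyMeasurable ε
      (Filter.Eventually.of_forall fun x => by rw [Real.norm_eq_abs]; exact hbd x)
    set hL : Lp ℝ 2 μ := hmemh.toLp hfun with hLdef
    have hLae : (hL : X → ℝ) =ᵐ[μ] hfun := hmemh.coeFn_toLp
    have hL0 : hL ≠ 0 := by
      intro h0
      have heq0 : hmemh.toLp hfun = MemLp.zero.toLp (0 : X → ℝ) := by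
        rw [MemLp.toLp_zero]; exact h0
      have hae0 : hfun =ᵐ[μ] 0 := (MemLp.toLp_eq_toLp_iff _ _).mp heq0
      have h' : ∀ᵐ x ∂μ, hfun x = 0 := by
        filter_upwards [hae0] with x hx; simpa using hx
      have hnull : μ {x | hfun x ≠ 0} = 0 := by
        have := ae_iff.mp h'
        simpa using this
      refine hB0 p₀ (measure_mono_null ?_ hnull)
      intro x hx
      show hfun x ≠ 0
      rw [hval p₀ x hx]; exact hdp₀
    have hfint : ∀ k, Integrable (f k) μ := fun k => (hfmem k).integrable (by norm_num)
    have hinnerh : ∀ k, ⟪hL, fk k⟫ = 0 := by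
      intro k
      rw [hinner]
      have heq : ∫ x, (hL : X → ℝ) x * f k x ∂μ
          = ∫ x, ∑ p, (B p).indicator (fun y => d p * f k y) x ∂μ := by
        refine integral_congr_ae ?_
        filter_upwards [hLae] with x hx
        rw [hx]
        show (∑ p, (B p).indicator (fun _ => d p) x) * f k x = _
        rw [Finset.sum_mul]
        refine Finset.sum_congr rfl fun p _ => ?_
        by_cases hxp : x ∈ B p
        · rw [Set.indicator_of_mem hxp, Set.indicator_of_mem hxp]
        · rw [Set.indicator_of_notMem hxp, Set.indicator_of_notMem hxp, zero_mul]
      rw [heq, integral_finset_sum]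
      · have hterm : ∀ p, ∫ x, (B p).indicator (fun y => d p * f k y) x ∂μ
            = d p * ∫ x in B p, f k x ∂μ := by
          intro p
          rw [integral_indicator (hBm p), integral_const_mul]
        rw [Finset.sum_congr rfl fun p _ => hterm p]
        exact hTd k
      · intro p _
        exact (((hfint k).const_mul (d p)).indicator (hBm p))
    -- the perturbed elements remain in W
    have hbnds : ∀ᵐ x ∂μ, (0 ≤ (g₀:X→ℝ) x + hfun x ∧ (g₀:X→ℝ) x + hfun x ≤ 1) ∧
        (0 ≤ (g₀:X→ℝ) x - hfun x ∧ (g₀:X→ℝ) x - hfun x ≤ 1) := by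
      filter_upwards [hghae] with x hx
      rw [hx]
      by_cases hxA : x ∈ A
      · have h1 : ε ≤ gh x := hxA.1
        have h2 : gh x ≤ 1 - ε := hxA.2
        have h3 := abs_le.mp (hbd x)
        exact ⟨⟨by linarith [h3.1], by linarith [h3.2]⟩,
          ⟨by linarith [h3.2], by linarith [h3.1]⟩⟩
      · rw [hzero x hxA]
        have h1 := (hghbd x).1
        have h2 := (hghbd x).2
        exact ⟨⟨by linarith, by linarith⟩, ⟨by linarith, by linarith⟩⟩
    have hWp : (g₀ + hL) ∈ W := by
      refine ⟨?_, fun k => ?_⟩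
      · filter_upwards [Lp.coeFn_add g₀ hL, hLae, hbnds] with x h1 h2 h3
        rw [h1, Pi.add_apply, h2]
        exact ⟨h3.1.1, h3.1.2⟩
      · rw [inner_add_left, hg₀W.2 k, hinnerh k, add_zero]
    have hWm : (g₀ - hL) ∈ W := by
      refine ⟨?_, fun k => ?_⟩
      · filter_upwards [Lp.coeFn_sub g₀ hL, hLae, hbnds] with x h1 h2 h3
        rw [h1, Pi.sub_apply, h2]
        exact ⟨h3.2.1, h3.2.2⟩
      · rw [inner_sub_left, hg₀W.2 k, hinnerh k, sub_zero]
    -- contradiction with extremality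
    have hseg : φ₀ ∈ openSegment ℝ (j (g₀ + hL)) (j (g₀ - hL)) := by
      refine ⟨1/2, 1/2, by norm_num, by norm_num, by norm_num, ?_⟩
      refine DFunLike.ext _ _ fun w => ?_
      have happ : (((1:ℝ)/2) • j (g₀ + hL) + ((1:ℝ)/2) • j (g₀ - hL)) w
          = ((1:ℝ)/2) * (j (g₀ + hL) w) + ((1:ℝ)/2) * (j (g₀ - hL) w) := rfl
      rw [happ, japply, japply, ← hjg₀, japply, inner_add_left, inner_sub_left]
      ring
    have hext := hφ₀ext (j (g₀ + hL)) (hKeq ▸ Set.mem_image_of_mem j hWp)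
      (j (g₀ - hL)) (hKeq ▸ Set.mem_image_of_mem j hWm) hseg
    have heq1 : g₀ + hL = g₀ := jinj (by rw [hext.1, ← hjg₀])
    exact hL0 (add_eq_left.mp heq1)


lemma lyapunov_product {X Y : Type*} [MeasurableSpace X] [MeasurableSpace Y]
    {ι : Type*} [Fintype ι] (σ : ι → Measure (X × Y)) [∀ i, IsFiniteMeasure (σ i)]
    (hatom : ∀ i, MeasureAtomless ((σ i).map Prod.fst))
    (F : ι → X × Y → ℝ) (hFm : ∀ i, Measurable (F i)) (hFi : ∀ i, Integrable (F i) (σ i))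
    (a : ℝ) (ha0 : 0 ≤ a) (ha1 : a ≤ 1) :
    ∃ Z : Set X, MeasurableSet Z ∧ ∀ i,
      ∫ z in Prod.fst ⁻¹' Z, F i z ∂(σ i) = a * ∫ z, F i z ∂(σ i) := by
  classical
  set sF : ι × Bool → X × Y → ℝ := fun κ z => if κ.2 then F κ.1 z else -F κ.1 z with hsF
  have hsFm : ∀ κ, Measurable (sF κ) := by
    rintro ⟨i, b⟩
    cases b
    · simpa [hsF] using hFm i
    · simpa [hsF] using hFm i
  set ν : ι × Bool → Measure X := fun κ =>
    ((σ κ.1).withDensity (fun z => ENNReal.ofReal (sF κ z))).map Prod.fst with hνdef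
  have hνapp : ∀ κ (Z : Set X), MeasurableSet Z →
      ν κ Z = ∫⁻ z in Prod.fst ⁻¹' Z, ENNReal.ofReal (sF κ z) ∂(σ κ.1) := by
    intro κ Z hZ
    show (((σ κ.1).withDensity (fun z => ENNReal.ofReal (sF κ z))).map Prod.fst) Z = _
    rw [Measure.map_apply measurable_fst hZ, withDensity_apply _ (measurable_fst hZ)]
  have hνuniv_le : ∀ κ (Z : Set X), MeasurableSet Z → ν κ Z ≠ ∞ := by
    intro κ Z hZ
    rw [hνapp κ Z hZ]
    have hb : ∫⁻ z in Prod.fst ⁻¹' Z, ENNReal.ofReal (sF κ z) ∂(σ κ.1)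
        ≤ ∫⁻ z, (‖F κ.1 z‖₊ : ℝ≥0∞) ∂(σ κ.1) := by
      refine (setLIntegral_le_lintegral _ _).trans (lintegral_mono fun z => ?_)
      cases hbb : κ.2
      · simp only [hsF, hbb, if_false]
        calc ENNReal.ofReal (-F κ.1 z) ≤ (‖-F κ.1 z‖₊ : ℝ≥0∞) := Real.ofReal_le_enorm _
          _ = (‖F κ.1 z‖₊ : ℝ≥0∞) := by rw [nnnorm_neg]
      · simp only [hsF, hbb, if_true]
        exact Real.ofReal_le_enorm _
    exact ne_top_of_le_ne_top (hFi κ.1).2.ne hb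
  set μbar : Measure X := (∑ i : ι, (σ i).map Prod.fst) + ∑ κ : ι × Bool, ν κ with hμbardef
  have hμbar_apply : ∀ (A : Set X),
      μbar A = (∑ i : ι, ((σ i).map Prod.fst) A) + ∑ κ : ι × Bool, ν κ A := by
    intro A
    rw [hμbardef, Measure.add_apply, Measure.finset_sum_apply, Measure.finset_sum_apply]
  haveI hfin : IsFiniteMeasure μbar := by
    constructor
    rw [hμbar_apply]
    refine ENNReal.add_lt_top.mpr ⟨?_, ?_⟩
    · exact ENNReal.sum_lt_top.mpr fun i _ => measure_lt_top _ _
    · exact ENNReal.sum_lt_top.mpr fun κ _ => lt_top_iff_ne_top.mpr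
        (hνuniv_le κ univ MeasurableSet.univ)
  have hmarg_le : ∀ i, (σ i).map Prod.fst ≤ μbar := by
    intro i
    refine Measure.le_iff.mpr fun s hs => ?_
    rw [hμbar_apply]
    calc ((σ i).map Prod.fst) s
        ≤ ∑ i' : ι, ((σ i').map Prod.fst) s :=
          Finset.single_le_sum (f := fun i' : ι => ((σ i').map Prod.fst) s) (fun _ _ => zero_le) (Finset.mem_univ i)
      _ ≤ _ := le_self_add
  have hν_le : ∀ κ, ν κ ≤ μbar := by
    intro κ
    refine Measure.le_iff.mpr fun s hs => ?_
    rw [hμbar_apply]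
    calc ν κ s ≤ ∑ κ' : ι × Bool, ν κ' s :=
          Finset.single_le_sum (f := fun κ' : ι × Bool => ν κ' s) (fun _ _ => zero_le) (Finset.mem_univ κ)
      _ ≤ _ := le_add_self
  have hμbar_atomless : MeasureAtomless μbar := by
    refine atomless_of_exists fun A hA hA0 => ?_
    have hex : ∃ i, ((σ i).map Prod.fst) A ≠ 0 := by
      by_contra hall
      push_neg at hall
      apply hA0
      rw [hμbar_apply]
      have hν0 : ∀ κ, ν κ A = 0 := by
        intro κ
        rw [hνapp κ A hA]
        have hz : σ κ.1 (Prod.fst ⁻¹' A) = 0 := by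
          have := hall κ.1
          rwa [Measure.map_apply measurable_fst hA] at this
        exact setLIntegral_measure_zero _ _ hz
      rw [Finset.sum_eq_zero fun i _ => hall i, Finset.sum_eq_zero fun κ _ => hν0 κ,
        add_zero]
    obtain ⟨i, hi⟩ := hex
    exact ⟨(σ i).map Prod.fst, hmarg_le i, hatom i, hi⟩
  haveI : ∀ κ, IsFiniteMeasure (ν κ) := fun κ =>
    ⟨lt_top_iff_ne_top.mpr (hνuniv_le κ univ MeasurableSet.univ)⟩
  have hν_ac : ∀ κ, ν κ ≪ μbar := fun κ => Measure.absolutelyContinuous_of_le (hν_le κ)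
  -- apply the abstract Lyapunov lemma to the Radon-Nikodym derivatives
  set f : ι × Bool → X → ℝ := fun κ x => ((ν κ).rnDeriv μbar x).toReal with hfdef
  obtain ⟨Z, hZm, hZint⟩ := lyapunov_segment hμbar_atomless f
    (fun κ => (Measure.measurable_rnDeriv _ _).ennreal_toReal)
    (fun κ => Filter.Eventually.of_forall fun x => ENNReal.toReal_nonneg)
    (fun κ => by
      filter_upwards [Measure.rnDeriv_le_one_of_le (hν_le κ)] with x hx
      have := ENNReal.toReal_mono (by simp) hx
      simpa using this)
    a ha0 ha1
  have key : ∀ κ (S : Set X), MeasurableSet S →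
      ∫ x in S, f κ x ∂μbar = (ν κ S).toReal := by
    intro κ S hS
    exact Measure.setIntegral_toReal_rnDeriv' (hν_ac κ) hS
  have hZν : ∀ κ, (ν κ Z).toReal = a * (ν κ univ).toReal := by
    intro κ
    rw [← key κ Z hZm, ← key κ univ MeasurableSet.univ, setIntegral_univ]
    exact hZint κ
  refine ⟨Z, hZm, fun i => ?_⟩
  have hsplit : ∀ (S : Set X), MeasurableSet S →
      ∫ z in Prod.fst ⁻¹' S, F i z ∂(σ i)
        = (ν (i, true) S).toReal - (ν (i, false) S).toReal := by
    intro S hS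
    have hmeas : MeasurableSet (Prod.fst ⁻¹' S : Set (X × Y)) := measurable_fst hS
    have hrestr : Integrable (F i) ((σ i).restrict (Prod.fst ⁻¹' S)) :=
      (hFi i).restrict
    have e1 : ∫⁻ z, ENNReal.ofReal (F i z) ∂((σ i).restrict (Prod.fst ⁻¹' S))
        = ν (i, true) S := by
      rw [hνapp (i, true) S hS]
      exact lintegral_congr fun z => by simp [hsF]
    have e2 : ∫⁻ z, ENNReal.ofReal (-F i z) ∂((σ i).restrict (Prod.fst ⁻¹' S))
        = ν (i, false) S := by
      rw [hνapp (i, false) S hS]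
      exact lintegral_congr fun z => by simp [hsF]
    rw [integral_eq_lintegral_pos_part_sub_lintegral_neg_part hrestr, e1, e2]
  have htot : ∫ z, F i z ∂(σ i) = (ν (i, true) univ).toReal - (ν (i, false) univ).toReal := by
    rw [← setIntegral_univ, ← Set.preimage_univ (f := (Prod.fst : X × Y → X))]
    exact hsplit univ MeasurableSet.univ
  rw [hsplit Z hZm, htot, hZν (i, true), hZν (i, false)]
  ring


end LyapAux

/-- with atomless marginals and a decomposable class `Φ` of measurable functions
with integrable losses, the cost-constraint epigraph `M_φ` is a convex subset of
`ℝ^{1+I+J}`. -/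
theorem cost_constraint_epigraph_convex
    {X Y : Type*} [MeasurableSpace X] [MeasurableSpace Y]
    (K I J : ℕ)
    (D : Measure (X × Y)) [IsProbabilityMeasure D]
    (P : Fin I → Measure (X × Y)) [∀ i, IsProbabilityMeasure (P i)]
    (Q : Fin J → Measure (X × Y)) [∀ j, IsProbabilityMeasure (Q j)]
    (l : EuclideanSpace ℝ (Fin K) → Y → ℝ)
    (g : Fin I → EuclideanSpace ℝ (Fin K) → Y → ℝ)
    (h : Fin J → EuclideanSpace ℝ (Fin K) → Y → ℝ)
    (hl : Measurable (Function.uncurry l))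
    (hg : ∀ i, Measurable (Function.uncurry (g i)))
    (hh : ∀ j, Measurable (Function.uncurry (h j)))
    -- atomless X-marginals
    (hatomD : MeasureAtomless (D.map Prod.fst))
    (hatomP : ∀ i, MeasureAtomless ((P i).map Prod.fst))
    (hatomQ : ∀ j, MeasureAtomless ((Q j).map Prod.fst))
    (Φ : Set (X → EuclideanSpace ℝ (Fin K)))
    (hΦmeas : ∀ φ ∈ Φ, Measurable φ)
    -- decomposability
    (hdec : ∀ φ₁ ∈ Φ, ∀ φ₂ ∈ Φ, ∀ Z : Set X, MeasurableSet Z →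
      ∃ φ₃ ∈ Φ, (∀ x ∈ Z, φ₃ x = φ₁ x) ∧ ∀ x ∉ Z, φ₃ x = φ₂ x)
    -- integrability of all the integrands
    (hintl : ∀ φ ∈ Φ, Integrable (fun z : X × Y => l (φ z.1) z.2) D)
    (hintg : ∀ φ ∈ Φ, ∀ i, Integrable (fun z : X × Y => g i (φ z.1) z.2) (P i))
    (hinth : ∀ φ ∈ Φ, ∀ j, Integrable (fun z : X × Y => h j (φ z.1) z.2) (Q j)) :
    Convex ℝ {t : ℝ × (Fin I → ℝ) × (Fin J → ℝ) | ∃ φ ∈ Φ,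
      (∫ z : X × Y, l (φ z.1) z.2 ∂D) = t.1 ∧
      (∀ i, (∫ z : X × Y, g i (φ z.1) z.2 ∂(P i)) ≤ t.2.1 i) ∧
      (∀ j, (∫ z : X × Y, h j (φ z.1) z.2 ∂(Q j)) = t.2.2 j)} := by
  intro t₁ ht₁ t₂ ht₂ a b ha hb hab
  obtain ⟨φ₁, hφ₁, hl₁, hg₁, hh₁⟩ := ht₁
  obtain ⟨φ₂, hφ₂, hl₂, hg₂, hh₂⟩ := ht₂
  have hb' : b = 1 - a := by linarith
  have ha1 : a ≤ 1 := by linarith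
  classical
  -- combined index for the measures / loss functions
  set σt : (Unit ⊕ Fin I ⊕ Fin J) → Measure (X × Y) := fun t =>
    match t with
    | Sum.inl _ => D
    | Sum.inr (Sum.inl i) => P i
    | Sum.inr (Sum.inr j) => Q j with hσt
  set F0 : (Unit ⊕ Fin I ⊕ Fin J) → EuclideanSpace ℝ (Fin K) → Y → ℝ := fun t =>
    match t with
    | Sum.inl _ => l
    | Sum.inr (Sum.inl i) => g i
    | Sum.inr (Sum.inr j) => h j with hF0
  haveI hprob : ∀ t, IsProbabilityMeasure (σt t) := by
    rintro (u | i | j)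
    · exact (inferInstance : IsProbabilityMeasure D)
    · exact (inferInstance : IsProbabilityMeasure (P i))
    · exact (inferInstance : IsProbabilityMeasure (Q j))
  have hmeasφ : ∀ φ ∈ Φ, ∀ t, Measurable (fun z : X × Y => F0 t (φ z.1) z.2) := by
    intro φ hφ t
    have hφm : Measurable φ := hΦmeas φ hφ
    have hun : Measurable (Function.uncurry (F0 t)) := by
      rcases t with u | i | j
      · exact hl
      · exact hg i
      · exact hh j
    exact hun.comp ((hφm.comp measurable_fst).prodMk measurable_snd)
  have hint : ∀ φ ∈ Φ, ∀ t, Integrable (fun z : X × Y => F0 t (φ z.1) z.2) (σt t) := by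
    intro φ hφ t
    rcases t with u | i | j
    · exact hintl φ hφ
    · exact hintg φ hφ i
    · exact hinth φ hφ j
  have hatomt : ∀ t, MeasureAtomless ((σt t).map Prod.fst) := by
    rintro (u | i | j)
    · exact hatomD
    · exact hatomP i
    · exact hatomQ j
  -- apply the product Lyapunov lemma
  obtain ⟨Z, hZ, hKey⟩ := LyapAux.lyapunov_product
    (ι := (Unit ⊕ Fin I ⊕ Fin J) × Bool)
    (fun κ => σt κ.1)
    (fun κ => hatomt κ.1)
    (fun κ z => F0 κ.1 ((bif κ.2 then φ₁ else φ₂) z.1) z.2)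
    (by
      rintro ⟨t, b'⟩
      cases b'
      · exact hmeasφ φ₂ hφ₂ t
      · exact hmeasφ φ₁ hφ₁ t)
    (by
      rintro ⟨t, b'⟩
      cases b'
      · exact hint φ₂ hφ₂ t
      · exact hint φ₁ hφ₁ t)
    a ha ha1
  obtain ⟨φ₃, hφ₃, hφ₃Z, hφ₃Zc⟩ := hdec φ₁ hφ₁ φ₂ hφ₂ Z hZ
  have hpre : MeasurableSet (Prod.fst ⁻¹' Z : Set (X × Y)) := measurable_fst hZ
  have keyfun : ∀ t : Unit ⊕ Fin I ⊕ Fin J,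
      ∫ z : X × Y, F0 t (φ₃ z.1) z.2 ∂(σt t)
        = a * (∫ z : X × Y, F0 t (φ₁ z.1) z.2 ∂(σt t))
          + b * (∫ z : X × Y, F0 t (φ₂ z.1) z.2 ∂(σt t)) := by
    intro t
    have h1 : ∫ z : X × Y in Prod.fst ⁻¹' Z, F0 t (φ₃ z.1) z.2 ∂(σt t)
        = ∫ z : X × Y in Prod.fst ⁻¹' Z, F0 t (φ₁ z.1) z.2 ∂(σt t) :=
      setIntegral_congr_fun hpre (fun z hz => by rw [hφ₃Z z.1 hz])
    have h2 : ∫ z : X × Y in (Prod.fst ⁻¹' Z)ᶜ, F0 t (φ₃ z.1) z.2 ∂(σt t)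
        = ∫ z : X × Y in (Prod.fst ⁻¹' Z)ᶜ, F0 t (φ₂ z.1) z.2 ∂(σt t) :=
      setIntegral_congr_fun hpre.compl (fun z hz => by rw [hφ₃Zc z.1 hz])
    have hsplit3 := integral_add_compl hpre (hint φ₃ hφ₃ t)
    have hsplit2 := integral_add_compl hpre (hint φ₂ hφ₂ t)
    have hA1 : ∫ z : X × Y in Prod.fst ⁻¹' Z, F0 t (φ₁ z.1) z.2 ∂(σt t)
        = a * ∫ z : X × Y, F0 t (φ₁ z.1) z.2 ∂(σt t) := hKey (t, true)
    have hA2 : ∫ z : X × Y in Prod.fst ⁻¹' Z, F0 t (φ₂ z.1) z.2 ∂(σt t)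
        = a * ∫ z : X × Y, F0 t (φ₂ z.1) z.2 ∂(σt t) := hKey (t, false)
    rw [hb']
    rw [h1, h2] at hsplit3
    linarith [hsplit3, hsplit2, hA1, hA2]
  refine ⟨φ₃, hφ₃, ?_, ?_, ?_⟩
  · have hk : ∫ z : X × Y, l (φ₃ z.1) z.2 ∂D
        = a * (∫ z : X × Y, l (φ₁ z.1) z.2 ∂D)
          + b * (∫ z : X × Y, l (φ₂ z.1) z.2 ∂D) := keyfun (Sum.inl ())
    rw [hk, hl₁, hl₂]
    simp [Prod.smul_fst, smul_eq_mul]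
  · intro i
    have hk : ∫ z : X × Y, g i (φ₃ z.1) z.2 ∂(P i)
        = a * (∫ z : X × Y, g i (φ₁ z.1) z.2 ∂(P i))
          + b * (∫ z : X × Y, g i (φ₂ z.1) z.2 ∂(P i)) := keyfun (Sum.inr (Sum.inl i))
    have hcomp : (a • t₁ + b • t₂).2.1 i = a * t₁.2.1 i + b * t₂.2.1 i := by
      simp [smul_eq_mul]
    rw [hk, hcomp]
    exact add_le_add (mul_le_mul_of_nonneg_left (hg₁ i) ha)
      (mul_le_mul_of_nonneg_left (hg₂ i) hb)
  · intro j
    have hk : ∫ z : X × Y, h j (φ₃ z.1) z.2 ∂(Q j)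
        = a * (∫ z : X × Y, h j (φ₁ z.1) z.2 ∂(Q j))
          + b * (∫ z : X × Y, h j (φ₂ z.1) z.2 ∂(Q j)) := keyfun (Sum.inr (Sum.inr j))
    rw [hk, hh₁ j, hh₂ j]
    simp [smul_eq_mul]
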